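/- Under the sector/gradient conditions, the LMI feasibility implies contraction: if there exist R > 0 and λ ≥ 0 such that [[(1-μ²)R, -R],[-R, R]] + λ[[-2mL, L+m],[L+m, -2]] ⪯ 0, then for any function φ : ℝ → ℝ satisfying m(x-y) ≤ φ(x) - φ(y) ≤ L(x-y) for x ≥ y and φ(x*) = 0, the scalar iteration xₖ₊₁ = xₖ - φ(xₖ) satisfies |xₖ₊₁ - x*| ≤ μ|xₖ - x*|. -/

import Mathlib

/-- A real matrix is negative semidefinite iff its negation is positive semidefinite. -/
def Matrix.NegSemidef' {n : Type*} [Fintype n] (M : Matrix n n ℝ) : Prop :=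
  (-M).PosSemidef

theorem stmt_18 (m L mu : ℝ) (hm : 0 < m) (hmL : m ≤ L) (hmu : mu ∈ Set.Ioo (0:ℝ) 1)
    (R lam : ℝ) (hR : 0 < R) (hlam : 0 ≤ lam)
    (hLMI : (!![(1 - mu^2)*R, -R; -R, R]
              + lam • !![-2*m*L, L+m; L+m, -2]).NegSemidef')
    (φ : ℝ → ℝ) (xstar : ℝ)
    (hslope : ∀ x y : ℝ, x ≠ y → m ≤ (φ x - φ y) / (x - y) ∧ (φ x - φ y) / (x - y) ≤ L)
    (hfix : φ xstar = 0) :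
    ∀ x : ℝ, |(x - φ x) - xstar| ≤ mu * |x - xstar| := by
  obtain ⟨hmu0, hmu1⟩ := hmu
  intro x
  by_cases hx : x = xstar
  · subst hx
    simp [hfix]
  -- sector inequality
  set e := x - xstar with he
  set u := φ x with hu
  have hne : e ≠ 0 := sub_ne_zero.mpr hx
  obtain ⟨h1, h2⟩ := hslope x xstar hx
  rw [hfix, sub_zero] at h1 h2
  have hsec : 0 ≤ (u - m * e) * (L * e - u) := by
    rcases hne.lt_or_gt with hlt | hgt
    · have h1' : u ≤ m * e := by
        rw [le_div_iff_of_neg hlt] at h1; linarith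
      have h2' : L * e ≤ u := by
        rw [div_le_iff_of_neg hlt] at h2; linarith
      nlinarith
    · have h1' : m * e ≤ u := by
        rw [le_div_iff₀ hgt] at h1; linarith
      have h2' : u ≤ L * e := by
        rw [div_le_iff₀ hgt] at h2; linarith
      nlinarith
  -- quadratic form from LMI
  have hq := (show Matrix.PosSemidef _ from hLMI).dotProduct_mulVec_nonneg ![e, u]
  simp [Matrix.mulVec, dotProduct, Fin.sum_univ_two, Matrix.neg_apply,
    Matrix.add_apply, Matrix.smul_apply, Matrix.cons_val_zero, Matrix.cons_val_one,
    Matrix.head_cons, smul_eq_mul] at hq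
  have key : (e - u) ^ 2 ≤ (mu * |e|) ^ 2 := by
    rw [mul_pow, sq_abs]
    nlinarith [mul_nonneg hlam hsec]
  have h3 : |e - u| ≤ mu * |e| := by
    have hnn : 0 ≤ mu * |e| := by positivity
    have := Real.sqrt_le_sqrt key
    rwa [Real.sqrt_sq_eq_abs, Real.sqrt_sq hnn] at this
  calc |(x - φ x) - xstar| = |e - u| := by rw [he, hu]; ring_nf
    _ ≤ mu * |e| := h3
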